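/- Let (B_t)_{t ≥ 0} be a stochastic process with almost surely continuous sample paths and B_0 = 0 almost surely. For b > 0 define the boundary c₂(t; b) = σ t / 2 + (1/σ) ln(x/q₀) + (1/(b σ)) ln(1 + b d₀ t) and the hitting time T(b)(ω) = inf { t ≥ 0 : B_t(ω) = c₂(t; b) } (values in [0,∞], inf ∅ = +∞). If 0 < b₁ ≤ b₂ then T(b₁) is stochastically smaller than T(b₂): P[T(b₁) > t] ≤ P[T(b₂) > t] for all t. -/

import Mathlib

open MeasureTheory
open scoped ENNReal

/-- Key monotonicity: `log(1+b u)/b` is antitone in `b > 0` for `u ≥ 0`. -/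
lemma arps_log_key {b₁ b₂ u : ℝ} (h1 : 0 < b₁) (h12 : b₁ ≤ b₂) (hu : 0 ≤ u) :
    b₁ * Real.log (1 + b₂ * u) ≤ b₂ * Real.log (1 + b₁ * u) := by
  have hb₂ : 0 < b₂ := h1.trans_le h12
  have hmem1 : (1 : ℝ) ∈ Set.Ioi (0 : ℝ) := by norm_num
  have hmem2 : (1 + b₂ * u) ∈ Set.Ioi (0 : ℝ) := by
    have : 0 ≤ b₂ * u := mul_nonneg hb₂.le hu
    simp only [Set.mem_Ioi]; linarith
  have ha : (0 : ℝ) ≤ 1 - b₁ / b₂ := by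
    have : b₁ / b₂ ≤ 1 := (div_le_one hb₂).2 h12
    linarith
  have hb : (0 : ℝ) ≤ b₁ / b₂ := by positivity
  have hab : (1 - b₁ / b₂) + b₁ / b₂ = 1 := by ring
  have key := (strictConcaveOn_log_Ioi.concaveOn).2 hmem1 hmem2 ha hb hab
  have hxy : (1 - b₁ / b₂) • (1 : ℝ) + (b₁ / b₂) • (1 + b₂ * u) = 1 + b₁ * u := by
    field_simp
    simp only [smul_eq_mul, sub_div, div_self hb₂.ne']
    have hdc : b₁ / b₂ * b₂ = b₁ := div_mul_cancel₀ b₁ hb₂.ne'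
    linear_combination u * hdc
  rw [hxy] at key
  simp only [Real.log_one, smul_eq_mul, mul_zero, zero_add] at key
  have := mul_le_mul_of_nonneg_left key hb₂.le
  calc b₁ * Real.log (1 + b₂ * u)
      = b₂ * (b₁ / b₂ * Real.log (1 + b₂ * u)) := by field_simp
    _ ≤ b₂ * Real.log (1 + b₁ * u) := this

theorem arps_hitting_time_stochastic_comparison_linear_vol
    {Ω : Type*} [MeasurableSpace Ω] (μ : Measure Ω) [IsProbabilityMeasure μ]
    (q₀ d₀ σ x : ℝ) (hq₀ : 0 < q₀) (hd₀ : 0 < d₀) (hσ : 0 < σ) (hx : 0 < x) (hxq : x < q₀)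
    (B : Ω → ℝ → ℝ)
    (hBcont : ∀ᵐ ω ∂μ, ContinuousOn (B ω) (Set.Ici 0))
    (hB0 : ∀ᵐ ω ∂μ, B ω 0 = 0)
    (c₂ : ℝ → ℝ → ℝ)
    (hc₂ : ∀ b t : ℝ, c₂ b t = σ * t / 2 + (1 / σ) * Real.log (x / q₀) +
      (1 / (b * σ)) * Real.log (1 + b * d₀ * t))
    (T : ℝ → Ω → ℝ≥0∞)
    (hT : ∀ b : ℝ, ∀ ω, T b ω = sInf (ENNReal.ofReal '' {t : ℝ | 0 ≤ t ∧ B ω t = c₂ b t})) :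
    ∀ b₁ b₂ : ℝ, 0 < b₁ → b₁ ≤ b₂ →
      ∀ t : ℝ≥0∞, μ {ω | T b₁ ω > t} ≤ μ {ω | T b₂ ω > t} := by
  intro b₁ b₂ hb₁ h12 t
  have hb₂ : 0 < b₂ := hb₁.trans_le h12
  -- boundary comparison: c₂ b₂ s ≤ c₂ b₁ s for s ≥ 0
  have hcomp : ∀ s : ℝ, 0 ≤ s → c₂ b₂ s ≤ c₂ b₁ s := by
    intro s hs
    rw [hc₂, hc₂]
    have key := arps_log_key hb₁ h12 (mul_nonneg hd₀.le hs)
    have h1 : 1 / (b₂ * σ) * Real.log (1 + b₂ * d₀ * s)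
        ≤ 1 / (b₁ * σ) * Real.log (1 + b₁ * d₀ * s) := by
      rw [div_mul_eq_mul_div, div_mul_eq_mul_div, div_le_div_iff₀ (by positivity) (by positivity)]
      have : b₁ * (d₀ * s) = b₁ * d₀ * s := by ring
      rw [this] at key
      have : b₂ * (d₀ * s) = b₂ * d₀ * s := by ring
      rw [this] at key
      nlinarith [key, hσ]
    linarith
  -- c₂ b 0 < 0
  have hc0 : ∀ b : ℝ, 0 < b → c₂ b 0 < 0 := by
    intro b hb
    rw [hc₂]
    have hlog : Real.log (x / q₀) < 0 :=
      Real.log_neg (by positivity) ((div_lt_one hq₀).2 hxq)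
    have h1 : 1 / σ * Real.log (x / q₀) < 0 := mul_neg_of_pos_of_neg (by positivity) hlog
    simp only [mul_zero, zero_div, zero_add]
    simpa [one_div] using h1
  -- continuity of c₂ b on Icc 0 s
  have hc₂cont : ∀ b : ℝ, 0 < b → ∀ s : ℝ, ContinuousOn (c₂ b) (Set.Icc 0 s) := by
    intro b hb s
    have : ContinuousOn (fun u : ℝ => σ * u / 2 + (1 / σ) * Real.log (x / q₀) +
        (1 / (b * σ)) * Real.log (1 + b * d₀ * u)) (Set.Icc 0 s) := by
      apply ContinuousOn.add
      · fun_prop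
      · apply ContinuousOn.mul continuousOn_const
        apply ContinuousOn.log (by fun_prop)
        intro u hu
        have : 0 ≤ b * d₀ * u := mul_nonneg (by positivity) hu.1
        positivity
    exact this.congr (fun u _ => hc₂ b u)
  apply measure_mono_ae
  filter_upwards [hBcont, hB0] with ω hcont h0 hω
  simp only [Set.mem_setOf_eq, gt_iff_lt] at hω ⊢
  -- suffices T b₁ ω ≤ T b₂ ω
  refine lt_of_lt_of_le hω ?_
  rw [hT, hT]
  apply le_sInf
  rintro y ⟨s, ⟨hs0, hBs⟩, rfl⟩
  -- IVT: find u ∈ [0, s] with B ω u = c₂ b₁ u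
  have hf0 : 0 < B ω 0 - c₂ b₁ 0 := by rw [h0]; linarith [hc0 b₁ hb₁]
  have hfs : B ω s - c₂ b₁ s ≤ 0 := by
    have := hcomp s hs0
    rw [hBs]; linarith
  have hBc : ContinuousOn (fun u => B ω u - c₂ b₁ u) (Set.Icc 0 s) :=
    (hcont.mono (fun u hu => hu.1)).sub (hc₂cont b₁ hb₁ s)
  have hIVT := intermediate_value_Icc' hs0 hBc
  have h0mem : (0 : ℝ) ∈ Set.Icc (B ω s - c₂ b₁ s) (B ω 0 - c₂ b₁ 0) :=
    ⟨hfs, hf0.le⟩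
  obtain ⟨u, hu, hueq⟩ := hIVT h0mem
  have hBu : B ω u = c₂ b₁ u := by linarith [sub_eq_zero.mp hueq]
  calc sInf (ENNReal.ofReal '' {t : ℝ | 0 ≤ t ∧ B ω t = c₂ b₁ t})
      ≤ ENNReal.ofReal u := sInf_le ⟨u, ⟨hu.1, hBu⟩, rfl⟩
    _ ≤ ENNReal.ofReal s := ENNReal.ofReal_le_ofReal hu.2
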